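/- Let S be an inverse semigroup, let F be a filter in E(S), let H = F↑, and let F̄ = {s ∈ S : for all f ∈ F, inv(s)·f·s ∈ F and s·f·inv(s) ∈ F}. Then: (a) for every a ∈ F̄, inv(a)·a ∈ F, so the left coset (aH)↑ is defined, and it satisfies (((aH)↑)⁻¹·(aH)↑)↑ = H and ((aH)↑·((aH)↑)⁻¹)↑ = H; (b) for a, b ∈ F̄, (aH)↑ = (bH)↑ if and only if there exists c ∈ F̄ with c ≤ a and c ≤ b; (c) for a, b ∈ F̄, ((a·b)H)↑ is the smallest closed atlas containing the elementwise product (aH)↑·(bH)↑; (d) every closed directed atlas A with (A⁻¹·A)↑ = H and (A·A⁻¹)↑ = H equals (aH)↑ for some a ∈ F̄. (Consequently the local group of the groupoid of filters at the identity H is isomorphic to F̄/σ.) -/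
import Mathlib


namespace InvSgpPaper

/-- `inv` makes the semigroup `S` an inverse semigroup: `a * inv a * a = a`,
`inv a * a * inv a = inv a`, and all idempotents commute. -/
structure IsInvSgp (S : Type*) [Semigroup S] (inv : S → S) : Prop where
  mul_inv_mul : ∀ a : S, a * inv a * a = a
  inv_mul_inv : ∀ a : S, inv a * a * inv a = inv a
  idem_comm : ∀ e f : S, e * e = e → f * f = f → e * f = f * e

section Defs

variable {S X Y : Type*} [Semigroup S]

/-- The natural partial order on an inverse semigroup:
`a ≤ b` iff `a = e * b` for some idempotent `e`. -/
def nle (a b : S) : Prop := ∃ e : S, e * e = e ∧ a = e * b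

/-- The upward closure `A↑` of a subset `A`. -/
def up (A : Set S) : Set S := {s : S | ∃ a ∈ A, nle a s}

/-- A closed inverse subsemigroup: closed under multiplication, under `inv`,
and upward closed (`H = H↑`). -/
def IsClosedInvSub (inv : S → S) (H : Set S) : Prop :=
  (∀ a ∈ H, ∀ b ∈ H, a * b ∈ H) ∧ (∀ a ∈ H, inv a ∈ H) ∧ up H = H

/-- The left coset `(sH)↑ = {x | s * h ≤ x for some h ∈ H}`. -/
def lcoset (s : S) (H : Set S) : Set S := {x : S | ∃ h ∈ H, nle (s * h) x}

/-- The set of idempotents of a subset `A`. -/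
def idemSet (A : Set S) : Set S := {e ∈ A | e * e = e}

/-- A filter in `E(S)`: a nonempty set of idempotents closed under
multiplication and upward closed within `E(S)`. -/
def IsFilterE (F : Set S) : Prop :=
  F.Nonempty ∧ (∀ e ∈ F, e * e = e) ∧ (∀ e ∈ F, ∀ f ∈ F, e * f ∈ F) ∧
    (∀ e ∈ F, ∀ f : S, f * f = f → nle e f → f ∈ F)

/-- `F̄ = {s ∈ S : ∀ f ∈ F, inv s * f * s ∈ F ∧ s * f * inv s ∈ F}`. -/
def fbar (inv : S → S) (F : Set S) : Set S :=
  {s : S | ∀ f ∈ F, inv s * f * s ∈ F ∧ s * f * inv s ∈ F}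

/-- The minimum group congruence `σ`: `a σ b` iff some `c` satisfies `c ≤ a` and `c ≤ b`. -/
def sigmaRel (a b : S) : Prop := ∃ c : S, nle c a ∧ nle c b

/-- The elementwise product of two subsets. -/
def setMul (A B : Set S) : Set S := {x : S | ∃ a ∈ A, ∃ b ∈ B, x = a * b}

/-- The elementwise inverse `A⁻¹` of a subset. -/
def setInv (inv : S → S) (A : Set S) : Set S := inv '' A

/-- An atlas: a subset `A` with `A·A⁻¹·A = A`. -/
def IsAtlas (inv : S → S) (A : Set S) : Prop := setMul (setMul A (setInv inv A)) A = A

/-- A (down-)directed subset: nonempty, and any two elements have a common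
lower bound inside it. -/
def IsDirectedSet (A : Set S) : Prop :=
  A.Nonempty ∧ ∀ a ∈ A, ∀ b ∈ A, ∃ c ∈ A, nle c a ∧ nle c b

/-- An action of `S` on `X` by partial maps, axioms (A1) and (A2). -/
def IsAction (act : S → X → Option X) : Prop :=
  (∀ e : S, e * e = e → ∀ x y : X, act e x = some y → y = x) ∧
    (∀ (s t : S) (x : X), act (s * t) x = (act t x).bind (act s))

/-- Transitivity of an action. -/
def IsTransitiveAct (act : S → X → Option X) : Prop :=
  ∀ x y : X, ∃ s : S, act s x = some y

/-- Effectiveness of an action: every point is in the domain of some element. -/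
def IsEffectiveAct (act : S → X → Option X) : Prop :=
  ∀ x : X, ∃ (s : S) (x' : X), act s x = some x'

/-- The stabilizer of a point. -/
def stab (act : S → X → Option X) (x : X) : Set S := {s : S | act s x = some x}

/-- A morphism of `S`-actions. -/
def IsMorphism (actX : S → X → Option X) (actY : S → Y → Option Y) (α : X → Y) : Prop :=
  ∀ (s : S) (x x' : X), actX s x = some x' → actY s (α x) = some (α x')

/-- A strong morphism of `S`-actions. -/
def IsStrongMorphism (actX : S → X → Option X) (actY : S → Y → Option Y)
    (α : X → Y) : Prop :=
  IsMorphism actX actY α ∧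
    ∀ (s : S) (x : X) (y' : Y), actY s (α x) = some y' → ∃ x' : X, actX s x = some x'

end Defs
set_option linter.unusedSectionVars false
set_option linter.unusedVariables false
section Basics
variable {S : Type*} [Semigroup S] {inv : S → S} (hS : IsInvSgp S inv)
include hS

lemma idem_mul {e f : S} (he : e * e = e) (hf : f * f = f) : (e * f) * (e * f) = e * f := by
  have h := hS.idem_comm e f he hf
  calc (e*f)*(e*f) = e*(f*e)*f := by simp only [mul_assoc]
    _ = e*(e*f)*f := by rw [h]
    _ = (e*e)*(f*f) := by simp only [mul_assoc]
    _ = e*f := by rw [he, hf]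

lemma idem_inv_mul (a : S) : (inv a * a) * (inv a * a) = inv a * a := by
  calc (inv a * a) * (inv a * a) = (inv a * a * inv a) * a := by simp only [mul_assoc]
    _ = inv a * a := by rw [hS.inv_mul_inv]

lemma idem_mul_inv (a : S) : (a * inv a) * (a * inv a) = a * inv a := by
  calc (a * inv a) * (a * inv a) = (a * inv a * a) * inv a := by simp only [mul_assoc]
    _ = a * inv a := by rw [hS.mul_inv_mul]

lemma inv_unique {a x : S} (h1 : a * x * a = a) (h2 : x * a * x = x) : x = inv a := by
  have hia : a * inv a * a = a := hS.mul_inv_mul a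
  have hii : inv a * a * inv a = inv a := hS.inv_mul_inv a
  have hxa : (x*a)*(x*a) = x*a := by
    calc (x*a)*(x*a) = (x*a*x)*a := by simp only [mul_assoc]
      _ = x*a := by rw [h2]
  have hia2 : (inv a*a)*(inv a*a) = inv a*a := idem_inv_mul hS a
  have hax : (a*x)*(a*x) = a*x := by
    calc (a*x)*(a*x) = (a*x*a)*x := by simp only [mul_assoc]
      _ = a*x := by rw [h1]
  have hai : (a*inv a)*(a*inv a) = a*inv a := idem_mul_inv hS a
  have key1 : x = inv a * a * x := by
    have hc := hS.idem_comm (x*a) (inv a*a) hxa hia2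
    calc x = x*a*x := h2.symm
      _ = x*(a*inv a*a)*x := by rw [hia]
      _ = ((x*a)*(inv a*a))*x := by simp only [mul_assoc]
      _ = ((inv a*a)*(x*a))*x := by rw [hc]
      _ = (inv a*a)*(x*a*x) := by simp only [mul_assoc]
      _ = inv a*a*x := by rw [h2]
  have key2 : inv a = inv a * a * x := by
    have hc := hS.idem_comm (a*x) (a*inv a) hax hai
    calc inv a = inv a*a*inv a := hii.symm
      _ = inv a*(a*x*a)*inv a := by rw [h1]
      _ = inv a*((a*x)*(a*inv a)) := by simp only [mul_assoc]
      _ = inv a*((a*inv a)*(a*x)) := by rw [hc]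
      _ = (inv a*a*inv a)*(a*x) := by simp only [mul_assoc]
      _ = inv a*(a*x) := by rw [hii]
      _ = inv a*a*x := by simp only [mul_assoc]
  rw [key1, ← key2]

lemma inv_inv (a : S) : inv (inv a) = a :=
  (inv_unique hS (hS.inv_mul_inv a) (hS.mul_inv_mul a)).symm

lemma inv_idem {e : S} (he : e * e = e) : inv e = e := by
  refine (inv_unique hS ?_ ?_).symm <;> rw [he, he]

lemma inv_mul_rev (a b : S) : inv (a * b) = inv b * inv a := by
  have c1 : (b * inv b) * (inv a * a) = (inv a * a) * (b * inv b) :=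
    hS.idem_comm _ _ (idem_mul_inv hS b) (idem_inv_mul hS a)
  refine (inv_unique hS ?_ ?_).symm
  · calc (a*b)*(inv b*inv a)*(a*b) = a*((b*inv b)*(inv a*a))*b := by simp only [mul_assoc]
      _ = a*((inv a*a)*(b*inv b))*b := by rw [c1]
      _ = (a*inv a*a)*(b*inv b*b) := by simp only [mul_assoc]
      _ = a*b := by rw [hS.mul_inv_mul, hS.mul_inv_mul]
  · calc (inv b*inv a)*(a*b)*(inv b*inv a)
        = inv b*((inv a*a)*(b*inv b))*inv a := by simp only [mul_assoc]
      _ = inv b*((b*inv b)*(inv a*a))*inv a := by rw [← c1]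
      _ = (inv b*b*inv b)*(inv a*a*inv a) := by simp only [mul_assoc]
      _ = inv b*inv a := by rw [hS.inv_mul_inv, hS.inv_mul_inv]

lemma conj_idem {e : S} (a : S) (he : e * e = e) :
    (a * e * inv a) * (a * e * inv a) = a * e * inv a := by
  have hc := hS.idem_comm e (inv a * a) he (idem_inv_mul hS a)
  calc (a*e*inv a)*(a*e*inv a) = a*(e*(inv a*a))*(e*inv a) := by simp only [mul_assoc]
    _ = a*((inv a*a)*e)*(e*inv a) := by rw [hc]
    _ = (a*inv a*a)*(e*e)*inv a := by simp only [mul_assoc]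
    _ = a*e*inv a := by rw [hS.mul_inv_mul, he]

lemma conj_idem' {e : S} (a : S) (he : e * e = e) :
    (inv a * e * a) * (inv a * e * a) = inv a * e * a := by
  have := conj_idem hS (inv a) he
  rwa [inv_inv hS] at this

/-- `a * e = (a * e * inv a) * a` for an idempotent `e`. -/
lemma swap_right {e : S} (a : S) (he : e * e = e) : a * e = (a * e * inv a) * a := by
  have hc := hS.idem_comm e (inv a * a) he (idem_inv_mul hS a)
  calc a * e = (a*inv a*a)*e := by rw [hS.mul_inv_mul]
    _ = a*((inv a*a)*e) := by simp only [mul_assoc]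
    _ = a*(e*(inv a*a)) := by rw [← hc]
    _ = (a*e*inv a)*a := by simp only [mul_assoc]

end Basics
section Order
variable {S : Type*} [Semigroup S] {inv : S → S} (hS : IsInvSgp S inv)

lemma nle_refl (hS : IsInvSgp S inv) (a : S) : nle a a :=
  ⟨a * inv a, idem_mul_inv hS a, (hS.mul_inv_mul a).symm⟩

lemma nle_trans {a b c : S} (hS : IsInvSgp S inv) (h1 : nle a b) (h2 : nle b c) : nle a c := by
  obtain ⟨e, he, hab⟩ := h1
  obtain ⟨f, hf, hbc⟩ := h2
  exact ⟨e * f, idem_mul hS he hf, by rw [hab, hbc, mul_assoc]⟩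

include hS

lemma nle_mul {a b c d : S} (h1 : nle a b) (h2 : nle c d) : nle (a * c) (b * d) := by
  obtain ⟨e, he, hab⟩ := h1
  obtain ⟨f, hf, hcd⟩ := h2
  refine ⟨e * (b * f * inv b), idem_mul hS he (conj_idem hS b hf), ?_⟩
  calc a * c = e * (b * f) * d := by rw [hab, hcd]; simp only [mul_assoc]
    _ = e * ((b * f * inv b) * b) * d := by rw [← swap_right hS b hf]
    _ = e * (b * f * inv b) * (b * d) := by simp only [mul_assoc]

lemma nle_inv {a b : S} (h : nle a b) : nle (inv a) (inv b) := by
  obtain ⟨e, he, hab⟩ := h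
  refine ⟨inv b * e * b, conj_idem' hS b he, ?_⟩
  have : inv a = inv b * e := by rw [hab, inv_mul_rev hS, inv_idem hS he]
  rw [this]
  calc inv b * e = (inv b * e * inv (inv b)) * inv b := swap_right hS (inv b) he
    _ = (inv b * e * b) * inv b := by rw [inv_inv hS]

omit hS in
lemma nle_idem_left {e : S} (a : S) (he : e * e = e) : nle (e * a) a := ⟨e, he, rfl⟩

lemma nle_idem_right {e : S} (a : S) (he : e * e = e) : nle (a * e) a :=
  ⟨a * e * inv a, conj_idem hS a he, swap_right hS a he⟩

end Order

section FilterH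
variable {S : Type*} [Semigroup S] {inv : S → S} {F H : Set S}
variable (hS : IsInvSgp S inv) (hF : IsFilterE F) (hH : H = up F)
include hS hF hH

lemma F_sub_H : F ⊆ H := fun f hf => by
  rw [hH]; exact ⟨f, hf, nle_refl hS f⟩

lemma H_up {h x : S} (hh : h ∈ H) (hle : nle h x) : x ∈ H := by
  rw [hH] at hh ⊢
  obtain ⟨f, hfF, hfh⟩ := hh
  exact ⟨f, hfF, nle_trans hS hfh hle⟩

lemma H_mul {h k : S} (hh : h ∈ H) (hk : k ∈ H) : h * k ∈ H := by
  rw [hH] at hh hk ⊢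
  obtain ⟨f, hfF, hfh⟩ := hh
  obtain ⟨g, hgF, hgk⟩ := hk
  exact ⟨f * g, hF.2.2.1 f hfF g hgF, nle_mul hS hfh hgk⟩

lemma H_inv {h : S} (hh : h ∈ H) : inv h ∈ H := by
  rw [hH] at hh ⊢
  obtain ⟨f, hfF, hfh⟩ := hh
  exact ⟨f, hfF, by
    have := nle_inv hS hfh
    rwa [inv_idem hS (hF.2.1 f hfF)] at this⟩

lemma idem_H_mem_F {h : S} (hh : h ∈ H) (hidem : h * h = h) : h ∈ F := by
  rw [hH] at hh
  obtain ⟨f, hfF, hfh⟩ := hh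
  exact hF.2.2.2 f hfF h hidem hfh

lemma H_sub_fbar : H ⊆ fbar inv F := by
  intro h hh f hfF
  have hfH : f ∈ H := F_sub_H hS hF hH hfF
  constructor
  · exact idem_H_mem_F hS hF hH (H_mul hS hF hH (H_mul hS hF hH (H_inv hS hF hH hh) hfH) hh)
      (conj_idem' hS h (hF.2.1 f hfF))
  · exact idem_H_mem_F hS hF hH (H_mul hS hF hH (H_mul hS hF hH hh hfH) (H_inv hS hF hH hh))
      (conj_idem hS h (hF.2.1 f hfF))

lemma F_sub_fbar : F ⊆ fbar inv F := fun f hf => H_sub_fbar hS hF hH (F_sub_H hS hF hH hf)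

omit hH in
lemma fbar_mul {s t : S} (hs : s ∈ fbar inv F) (ht : t ∈ fbar inv F) :
    s * t ∈ fbar inv F := by
  intro f hfF
  constructor
  · have h1 := (hs f hfF).1
    have h2 := (ht (inv s * f * s) h1).1
    have : inv (s*t) * f * (s*t) = inv t * (inv s * f * s) * t := by
      rw [inv_mul_rev hS]; simp only [mul_assoc]
    rwa [this]
  · have h1 := (ht f hfF).2
    have h2 := (hs (t * f * inv t) h1).2
    have : (s*t) * f * inv (s*t) = s * (t * f * inv t) * inv s := by
      rw [inv_mul_rev hS]; simp only [mul_assoc]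
    rwa [this]

omit hH in
lemma fbar_inv_mul_self {a : S} (ha : a ∈ fbar inv F) : inv a * a ∈ F := by
  obtain ⟨f, hfF⟩ := hF.1
  have h1 : inv a * f * a ∈ F := (ha f hfF).1
  refine hF.2.2.2 _ h1 _ (idem_inv_mul hS a) ⟨inv a * f * a, hF.2.1 _ h1, ?_⟩
  calc inv a * f * a = inv a * f * (a * inv a * a) := by rw [hS.mul_inv_mul]
    _ = (inv a * f * a) * (inv a * a) := by simp only [mul_assoc]

omit hH in
lemma fbar_self_mul_inv {a : S} (ha : a ∈ fbar inv F) : a * inv a ∈ F := by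
  obtain ⟨f, hfF⟩ := hF.1
  have h1 : a * f * inv a ∈ F := (ha f hfF).2
  refine hF.2.2.2 _ h1 _ (idem_mul_inv hS a) ⟨a * f * inv a, hF.2.1 _ h1, ?_⟩
  calc a * f * inv a = a * f * (inv a * a * inv a) := by rw [hS.inv_mul_inv]
    _ = (a * f * inv a) * (a * inv a) := by simp only [mul_assoc]

end FilterH

section Coset
variable {S : Type*} [Semigroup S] {inv : S → S} {F H : Set S}
variable (hS : IsInvSgp S inv) (hF : IsFilterE F) (hH : H = up F)

lemma up_lcoset (hS : IsInvSgp S inv) (s : S) (H : Set S) : up (lcoset s H) = lcoset s H := by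
  ext x
  constructor
  · rintro ⟨y, ⟨h, hh, hle⟩, hyx⟩
    exact ⟨h, hh, nle_trans hS hle hyx⟩
  · intro hx
    exact ⟨x, hx, nle_refl hS x⟩

include hS hF hH

lemma mem_lcoset_iff {a : S} (haa : inv a * a ∈ H) (x : S) :
    x ∈ lcoset a H ↔ inv a * x ∈ H := by
  constructor
  · rintro ⟨h, hh, hle⟩
    have h1 : nle (inv a * (a * h)) (inv a * x) := nle_mul hS (nle_refl hS (inv a)) hle
    have h2 : inv a * (a * h) = (inv a * a) * h := by simp only [mul_assoc]
    rw [h2] at h1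
    exact H_up hS hF hH (H_mul hS hF hH haa hh) h1
  · intro hx
    refine ⟨inv a * x, hx, ⟨a * inv a, idem_mul_inv hS a, by simp only [mul_assoc]⟩⟩

lemma self_mem_lcoset {a : S} (haa : inv a * a ∈ H) : a ∈ lcoset a H := by
  refine ⟨inv a * a, haa, ?_⟩
  rw [show a * (inv a * a) = a by rw [← mul_assoc, hS.mul_inv_mul]]
  exact nle_refl hS a

lemma lcoset_subset {a b : S} (haa : inv a * a ∈ H) (hbb : inv b * b ∈ H)
    (hab : inv a * b ∈ H) : lcoset b H ⊆ lcoset a H := by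
  intro x hx
  rw [mem_lcoset_iff hS hF hH hbb] at hx
  rw [mem_lcoset_iff hS hF hH haa]
  have key : (inv a * b) * (inv b * x) = (inv a * (b * inv b) * a) * (inv a * x) := by
    calc (inv a * b) * (inv b * x) = (inv a * (b * inv b)) * x := by simp only [mul_assoc]
      _ = ((inv a * (b * inv b) * inv (inv a)) * inv a) * x :=
          by rw [← swap_right hS (inv a) (idem_mul_inv hS b)]
      _ = ((inv a * (b * inv b) * a) * inv a) * x := by rw [inv_inv hS]
      _ = (inv a * (b * inv b) * a) * (inv a * x) := by simp only [mul_assoc]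
  have hidem : (inv a * (b * inv b) * a) * (inv a * (b * inv b) * a) = inv a * (b * inv b) * a :=
    conj_idem' hS a (idem_mul_inv hS b)
  have hle : nle ((inv a * b) * (inv b * x)) (inv a * x) :=
    ⟨inv a * (b * inv b) * a, hidem, key⟩
  exact H_up hS hF hH (H_mul hS hF hH hab hx) hle

lemma lcoset_eq {a b : S} (haa : inv a * a ∈ H) (hbb : inv b * b ∈ H)
    (hab : inv a * b ∈ H) : lcoset a H = lcoset b H := by
  have hba : inv b * a ∈ H := by
    have := H_inv hS hF hH hab
    rwa [inv_mul_rev hS, inv_inv hS] at this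
  exact Set.Subset.antisymm (lcoset_subset hS hF hH hbb haa hba)
    (lcoset_subset hS hF hH haa hbb hab)

end Coset

/-- Description of the local group of the groupoid of filters at
the identity `H = F↑`, in terms of the cosets `(aH)↑` with `a ∈ F̄`. -/
theorem stmt18 {S : Type*} [Semigroup S] (inv : S → S) (hS : IsInvSgp S inv)
    (F : Set S) (hF : IsFilterE F) (H : Set S) (hH : H = up F) :
    -- (a) each a ∈ F̄ gives a well-defined coset (aH)↑ in the local group at H
    (∀ a ∈ fbar inv F, inv a * a ∈ F ∧
      up (setMul (setInv inv (lcoset a H)) (lcoset a H)) = H ∧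
      up (setMul (lcoset a H) (setInv inv (lcoset a H))) = H) ∧
    -- (b) (aH)↑ = (bH)↑ iff a σ b inside F̄
    (∀ a ∈ fbar inv F, ∀ b ∈ fbar inv F,
      (lcoset a H = lcoset b H ↔ ∃ c ∈ fbar inv F, nle c a ∧ nle c b)) ∧
    -- (c) ((a*b)H)↑ is the smallest closed atlas containing (aH)↑ · (bH)↑
    (∀ a ∈ fbar inv F, ∀ b ∈ fbar inv F,
      setMul (lcoset a H) (lcoset b H) ⊆ lcoset (a * b) H ∧
      up (lcoset (a * b) H) = lcoset (a * b) H ∧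
      IsAtlas inv (lcoset (a * b) H) ∧
      (∀ C : Set S, up C = C → IsAtlas inv C →
        setMul (lcoset a H) (lcoset b H) ⊆ C → lcoset (a * b) H ⊆ C)) ∧
    -- (d) every element of the local group at H arises this way
    (∀ A : Set S, up A = A → IsDirectedSet A → IsAtlas inv A →
      up (setMul (setInv inv A) A) = H → up (setMul A (setInv inv A)) = H →
      ∃ a ∈ fbar inv F, A = lcoset a H) := by

    have hFH : F ⊆ H := F_sub_H hS hF hH
    refine ⟨?_, ?_, ?_, ?_⟩
    -- Part (a)
    · intro a ha
      have haaF : inv a * a ∈ F := fbar_inv_mul_self hS hF ha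
      have haa : inv a * a ∈ H := hFH haaF
      refine ⟨haaF, ?_, ?_⟩
      · -- up ((aH)⁻¹ · (aH)) = H
        ext s
        constructor
        · rintro ⟨t, ⟨p, ⟨x, hx, rfl⟩, y, hy, rfl⟩, hts⟩
          obtain ⟨h, hh, hhx⟩ := hx
          obtain ⟨h', hh', hhy⟩ := hy
          have h1 : nle (inv h * inv a) (inv x) := by
            have := nle_inv hS hhx
            rwa [inv_mul_rev hS] at this
          have h2 : nle ((inv h * inv a) * (a * h')) (inv x * y) := nle_mul hS h1 hhy
          have h3 : (inv h * inv a) * (a * h') = inv h * ((inv a * a) * h') := by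
            simp only [mul_assoc]
          rw [h3] at h2
          have h4 : inv h * ((inv a * a) * h') ∈ H :=
            H_mul hS hF hH (H_inv hS hF hH hh) (H_mul hS hF hH haa hh')
          exact H_up hS hF hH (H_up hS hF hH h4 h2) hts
        · intro hs
          refine ⟨inv a * (a * s),
            ⟨inv a, ⟨a, self_mem_lcoset hS hF hH haa, rfl⟩,
              a * s, ⟨s, hs, nle_refl hS _⟩, rfl⟩, ?_⟩
          exact ⟨inv a * a, idem_inv_mul hS a, by simp only [mul_assoc]⟩
      · -- up ((aH) · (aH)⁻¹) = H
        ext s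
        constructor
        · rintro ⟨t, ⟨x, hx, p, ⟨y, hy, rfl⟩, rfl⟩, hts⟩
          obtain ⟨h, hh, hhx⟩ := hx
          obtain ⟨h', hh', hhy⟩ := hy
          rw [hH] at hh hh'
          obtain ⟨f, hfF, hfh⟩ := hh
          obtain ⟨f', hf'F, hf'h'⟩ := hh'
          have h1 : nle (inv h' * inv a) (inv y) := by
            have := nle_inv hS hhy
            rwa [inv_mul_rev hS] at this
          have h2 : nle ((a * h) * (inv h' * inv a)) (x * inv y) :=
            nle_mul hS hhx h1
          have h3 : nle (f' * inv a) (inv h' * inv a) := by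
            refine nle_mul hS ?_ (nle_refl hS (inv a))
            have := nle_inv hS hf'h'
            rwa [inv_idem hS (hF.2.1 f' hf'F)] at this
          have h4 : nle ((a * f) * (f' * inv a)) ((a * h) * (inv h' * inv a)) :=
            nle_mul hS (nle_mul hS (nle_refl hS a) hfh) h3
          have h5 : a * (f * f') * inv a ∈ F :=
            (ha (f * f') (hF.2.2.1 f hfF f' hf'F)).2
          have h6 : (a * f) * (f' * inv a) ∈ H := by
            refine H_up hS hF hH (hFH h5) ?_
            have heq : a * (f * f') * inv a = (a * f) * (f' * inv a) := by
              simp only [mul_assoc]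
            rw [heq]
            exact nle_refl hS _
          exact H_up hS hF hH (H_up hS hF hH (H_up hS hF hH h6 h4) h2) hts
        · intro hs
          have hsH := hs
          rw [hH] at hsH
          obtain ⟨f, hfF, hfs⟩ := hsH
          have hkH : inv a * s * a ∈ H := by
            rw [hH]
            exact ⟨inv a * f * a, (ha f hfF).1,
              nle_mul hS (nle_mul hS (nle_refl hS (inv a)) hfs) (nle_refl hS a)⟩
          have hsa : s * a ∈ lcoset a H := by
            refine ⟨inv a * s * a, hkH, ⟨a * inv a, idem_mul_inv hS a, ?_⟩⟩
            simp only [mul_assoc]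
          refine ⟨(s * a) * inv a,
            ⟨s * a, hsa, inv a, ⟨a, self_mem_lcoset hS hF hH haa, rfl⟩, rfl⟩, ?_⟩
          rw [mul_assoc]
          exact nle_idem_right hS s (idem_mul_inv hS a)
    -- Part (b)
    · intro a ha b hb
      have haa : inv a * a ∈ H := hFH (fbar_inv_mul_self hS hF ha)
      have hbb : inv b * b ∈ H := hFH (fbar_inv_mul_self hS hF hb)
      constructor
      · intro heq
        have hbmem : b ∈ lcoset a H := heq ▸ self_mem_lcoset hS hF hH hbb
        have habH : inv a * b ∈ H := (mem_lcoset_iff hS hF hH haa b).1 hbmem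
        rw [hH] at habH
        obtain ⟨f, hfF, hfab⟩ := habH
        refine ⟨a * f, fbar_mul hS hF ha (F_sub_fbar hS hF hH hfF),
          nle_idem_right hS a (hF.2.1 f hfF), ?_⟩
        have h1 : nle (a * f) (a * (inv a * b)) := nle_mul hS (nle_refl hS a) hfab
        have h2 : nle (a * (inv a * b)) b :=
          ⟨a * inv a, idem_mul_inv hS a, by simp only [mul_assoc]⟩
        exact nle_trans hS h1 h2
      · rintro ⟨c, hc, hca, hcb⟩
        have h1 : nle (inv c * c) (inv a * b) := nle_mul hS (nle_inv hS hca) hcb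
        have habH : inv a * b ∈ H :=
          H_up hS hF hH (hFH (fbar_inv_mul_self hS hF hc)) h1
        exact lcoset_eq hS hF hH haa hbb habH
    -- Part (c)
    · intro a ha b hb
      have hab : a * b ∈ fbar inv F := fbar_mul hS hF ha hb
      have haa : inv a * a ∈ H := hFH (fbar_inv_mul_self hS hF ha)
      have hbb : inv b * b ∈ H := hFH (fbar_inv_mul_self hS hF hb)
      have hcc : inv (a * b) * (a * b) ∈ H := hFH (fbar_inv_mul_self hS hF hab)
      refine ⟨?_, up_lcoset hS _ _, ?_, ?_⟩
      · -- product of cosets included in coset of product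
        rintro s ⟨x, hx, y, hy, rfl⟩
        rw [mem_lcoset_iff hS hF hH hcc]
        have hk : inv a * x ∈ H := (mem_lcoset_iff hS hF hH haa x).1 hx
        have hl : inv b * y ∈ H := (mem_lcoset_iff hS hF hH hbb y).1 hy
        have hkH := hk
        rw [hH] at hkH
        obtain ⟨f, hfF, hfk⟩ := hkH
        have e0 : inv (a * b) * (x * y) = (inv b * (inv a * x)) * y := by
          rw [inv_mul_rev hS]
          simp only [mul_assoc]
        rw [e0]
        have s1 : nle ((inv b * f) * y) ((inv b * (inv a * x)) * y) :=
          nle_mul hS (nle_mul hS (nle_refl hS (inv b)) hfk) (nle_refl hS y)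
        have s2 : nle ((inv b * f) * ((b * inv b) * y)) ((inv b * f) * y) :=
          nle_mul hS (nle_refl hS (inv b * f)) (nle_idem_left y (idem_mul_inv hS b))
        have e1 : (inv b * f) * ((b * inv b) * y) = (inv b * f * b) * (inv b * y) := by
          simp only [mul_assoc]
        have m1 : (inv b * f * b) * (inv b * y) ∈ H :=
          H_mul hS hF hH (hFH (hb f hfF).1) hl
        have m2 : (inv b * f) * ((b * inv b) * y) ∈ H := by rw [e1]; exact m1
        exact H_up hS hF hH (H_up hS hF hH m2 s2) s1
      · -- lcoset (a*b) H is an atlas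
        ext s
        constructor
        · rintro ⟨t, ⟨x, hx, p, ⟨y, hy, rfl⟩, rfl⟩, z, hz, rfl⟩
          rw [mem_lcoset_iff hS hF hH hcc]
          have hk : inv (a * b) * x ∈ H := (mem_lcoset_iff hS hF hH hcc x).1 hx
          have hm : inv (a * b) * z ∈ H := (mem_lcoset_iff hS hF hH hcc z).1 hz
          obtain ⟨h, hh, hhy⟩ := hy
          have h1 : nle (inv h * inv (a * b)) (inv y) := by
            have := nle_inv hS hhy
            rwa [inv_mul_rev hS] at this
          have chain : nle (inv (a * b) * ((x * (inv h * inv (a * b))) * z))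
              (inv (a * b) * ((x * inv y) * z)) :=
            nle_mul hS (nle_refl hS (inv (a * b)))
              (nle_mul hS (nle_mul hS (nle_refl hS x) h1) (nle_refl hS z))
          have e2 : inv (a * b) * ((x * (inv h * inv (a * b))) * z)
              = ((inv (a * b) * x) * inv h) * (inv (a * b) * z) := by
            simp only [mul_assoc]
          have m3 : ((inv (a * b) * x) * inv h) * (inv (a * b) * z) ∈ H :=
            H_mul hS hF hH (H_mul hS hF hH hk (H_inv hS hF hH hh)) hm
          have m4 : inv (a * b) * ((x * (inv h * inv (a * b))) * z) ∈ H := by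
            rw [e2]; exact m3
          exact H_up hS hF hH m4 chain
        · intro hs
          exact ⟨s * inv s, ⟨s, hs, inv s, ⟨s, hs, rfl⟩, rfl⟩, s, hs,
            (hS.mul_inv_mul s).symm⟩
      · -- minimality
        intro C hupC _ hsub s hs
        obtain ⟨h, hh, hle⟩ := hs
        have hmem : a * (b * h) ∈ C := hsub
          ⟨a, self_mem_lcoset hS hF hH haa, b * h, ⟨h, hh, nle_refl hS _⟩, rfl⟩
        rw [mul_assoc] at hle
        rw [← hupC]
        exact ⟨a * (b * h), hmem, hle⟩
    -- Part (d)
    · intro A hupA hdir hatlas h1 h2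
      obtain ⟨⟨a, haA⟩, hdir2⟩ := hdir
      have hinvmul : ∀ x ∈ A, ∀ y ∈ A, inv x * y ∈ H := by
        intro x hx y hy
        rw [← h1]
        exact ⟨inv x * y, ⟨inv x, ⟨x, hx, rfl⟩, y, hy, rfl⟩, nle_refl hS _⟩
      have hmulinv : ∀ x ∈ A, ∀ y ∈ A, x * inv y ∈ H := by
        intro x hx y hy
        rw [← h2]
        exact ⟨x * inv y, ⟨x, hx, inv y, ⟨y, hy, rfl⟩, rfl⟩, nle_refl hS _⟩
      have hafbar : a ∈ fbar inv F := by
        intro f hfF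
        have hfidem := hF.2.1 f hfF
        constructor
        · have hfH : f ∈ H := hFH hfF
          rw [← h2] at hfH
          obtain ⟨t, ⟨u, hu, p, ⟨v, hv, rfl⟩, rfl⟩, htf⟩ := hfH
          have hle : nle (inv a * (u * inv v) * a) (inv a * f * a) :=
            nle_mul hS (nle_mul hS (nle_refl hS (inv a)) htf) (nle_refl hS a)
          have heq : inv a * (u * inv v) * a = (inv a * u) * (inv v * a) := by
            simp only [mul_assoc]
          have hm : inv a * (u * inv v) * a ∈ H := by
            rw [heq]
            exact H_mul hS hF hH (hinvmul a haA u hu) (hinvmul v hv a haA)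
          exact idem_H_mem_F hS hF hH (H_up hS hF hH hm hle) (conj_idem' hS a hfidem)
        · have hfH : f ∈ H := hFH hfF
          rw [← h1] at hfH
          obtain ⟨t, ⟨p, ⟨u, hu, rfl⟩, v, hv, rfl⟩, htf⟩ := hfH
          have hle : nle (a * (inv u * v) * inv a) (a * f * inv a) :=
            nle_mul hS (nle_mul hS (nle_refl hS a) htf) (nle_refl hS (inv a))
          have heq : a * (inv u * v) * inv a = (a * inv u) * (v * inv a) := by
            simp only [mul_assoc]
          have hm : a * (inv u * v) * inv a ∈ H := by
            rw [heq]
            exact H_mul hS hF hH (hmulinv a haA u hu) (hmulinv v hv a haA)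
          exact idem_H_mem_F hS hF hH (H_up hS hF hH hm hle) (conj_idem hS a hfidem)
      have haaH : inv a * a ∈ H := hFH (fbar_inv_mul_self hS hF hafbar)
      refine ⟨a, hafbar, ?_⟩
      ext x
      constructor
      · intro hxA
        rw [mem_lcoset_iff hS hF hH haaH]
        exact hinvmul a haA x hxA
      · intro hx
        obtain ⟨h, hh, hle⟩ := hx
        have hhH := hh
        rw [hH] at hhH
        obtain ⟨f, hfF, hfh⟩ := hhH
        have hfH : f ∈ H := hFH hfF
        rw [← h1] at hfH
        obtain ⟨t, ⟨p, ⟨u, hu, rfl⟩, v, hv, rfl⟩, htf⟩ := hfH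
        obtain ⟨w, hwA, hwu, hwv⟩ := hdir2 u hu v hv
        have h3 : nle (inv w * w) f :=
          nle_trans hS (nle_mul hS (nle_inv hS hwu) hwv) htf
        have hmemA : (a * inv w) * w ∈ A := by
          rw [← hatlas]
          exact ⟨a * inv w, ⟨a, haA, inv w, ⟨w, hwA, rfl⟩, rfl⟩, w, hwA, rfl⟩
        have c1 : nle ((a * inv w) * w) (a * f) := by
          have := nle_mul hS (nle_refl hS a) h3
          rwa [← mul_assoc] at this
        have c2 : nle (a * f) (a * h) := nle_mul hS (nle_refl hS a) hfh
        have c3 : nle ((a * inv w) * w) x :=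
          nle_trans hS (nle_trans hS c1 c2) hle
        rw [← hupA]
        exact ⟨(a * inv w) * w, hmemA, c3⟩

end InvSgpPaper
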